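/- Every strongly admissible labelling has at most one min-max numbering: if MM1 and MM2 are both min-max numberings of the same admissible labelling Lab and both use only natural numbers, then MM1 = MM2. -/
import Mathlib


inductive Label where
  | inn | out | und
deriving DecidableEq

/-- A labelling is admissible if every in-labelled argument has all its attackers
labelled out, and every out-labelled argument has at least one in-labelled attacker. -/
def Admissible {Ar : Type*} (att : Ar → Ar → Prop) (L : Ar → Label) : Prop :=
  (∀ x, L x = Label.inn → ∀ y, att y x → L y = Label.out) ∧
  (∀ x, L x = Label.out → ∃ y, att y x ∧ L y = Label.inn)

/-- A min-max numbering (with only natural-number values): in-arguments are numbered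
1 + max of the numbers of their out-labelled attackers (max ∅ = 0), and out-arguments
1 + min of the numbers of their in-labelled attackers. -/
def IsMinMax {Ar : Type*} (att : Ar → Ar → Prop) (L : Ar → Label) (MM : Ar → ℕ) : Prop :=
  (∀ x, L x = Label.inn → MM x = sSup (MM '' {y | att y x ∧ L y = Label.out}) + 1) ∧
  (∀ x, L x = Label.out → MM x = sInf (MM '' {y | att y x ∧ L y = Label.inn}) + 1)

/-- Strongly admissible: admissible and admitting a min-max numbering with only
natural-number (finite) values. -/
def StronglyAdmissible {Ar : Type*} (att : Ar → Ar → Prop) (L : Ar → Label) : Prop :=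
  Admissible att L ∧ ∃ MM : Ar → ℕ, IsMinMax att L MM

/-- Complete labelling: admissible, and every undec argument has an undec attacker
and no in-labelled attacker. -/
def CompleteLab {Ar : Type*} (att : Ar → Ar → Prop) (L : Ar → Label) : Prop :=
  Admissible att L ∧
  ∀ x, L x = Label.und →
    (∃ y, att y x ∧ L y = Label.und) ∧ ∀ y, att y x → L y ≠ Label.inn

/-- The order on labellings: Lab1 ⊑ Lab2 iff in(Lab1) ⊆ in(Lab2) and out(Lab1) ⊆ out(Lab2). -/
def LabLe {Ar : Type*} (L1 L2 : Ar → Label) : Prop :=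
  (∀ x, L1 x = Label.inn → L2 x = Label.inn) ∧
  (∀ x, L1 x = Label.out → L2 x = Label.out)

lemma minMax_le_aux
    {Ar : Type*} [Fintype Ar] (att : Ar → Ar → Prop) (Lab : Ar → Label) (MM1 MM2 : Ar → ℕ)
    (hadm : Admissible att Lab)
    (h1 : IsMinMax att Lab MM1) (h2 : IsMinMax att Lab MM2) :
    ∀ n x, Lab x ≠ Label.und → MM2 x ≤ n → MM1 x ≤ MM2 x := by
  intro n
  induction n with
  | zero =>
    intro x hx hle
    cases hL : Lab x with
    | inn => rw [h2.1 x hL] at hle; omega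
    | out => rw [h2.2 x hL] at hle; omega
    | und => exact absurd hL hx
  | succ n ih =>
    intro x hx hle
    cases hL : Lab x with
    | und => exact absurd hL hx
    | inn =>
      rw [h1.1 x hL, h2.1 x hL]
      rw [h2.1 x hL] at hle
      set S : Set Ar := {y | att y x ∧ Lab y = Label.out} with hS
      have hbdd : BddAbove (MM2 '' S) := Set.Finite.bddAbove (Set.toFinite _)
      have hsup : sSup (MM2 '' S) ≤ n := by omega
      rcases Set.eq_empty_or_nonempty S with hE | hNE
      · rw [hE]; simp
      · have key : sSup (MM1 '' S) ≤ sSup (MM2 '' S) := by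
          apply csSup_le (hNE.image _)
          rintro a ⟨y, hy, rfl⟩
          have hy2 : MM2 y ≤ sSup (MM2 '' S) :=
            le_csSup hbdd (Set.mem_image_of_mem _ hy)
          have h12 : MM1 y ≤ MM2 y := by
            apply ih y (by simp [hy.2]) (le_trans hy2 hsup)
          exact le_trans (le_trans h12 hy2) le_rfl
        omega
    | out =>
      rw [h2.2 x hL] at hle
      rw [h1.2 x hL, h2.2 x hL]
      set S : Set Ar := {y | att y x ∧ Lab y = Label.inn} with hS
      have hNE : S.Nonempty := by
        obtain ⟨y, hy1, hy2⟩ := hadm.2 x hL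
        exact ⟨y, hy1, hy2⟩
      have hNEi : (MM2 '' S).Nonempty := hNE.image _
      obtain ⟨y0, hy0S, hy0⟩ := Nat.sInf_mem hNEi
      have hy0le : MM2 y0 ≤ n := by omega
      have h12 : MM1 y0 ≤ MM2 y0 :=
        ih y0 (by simp [hy0S.2]) hy0le
      have hinf : sInf (MM1 '' S) ≤ MM1 y0 :=
        Nat.sInf_le (Set.mem_image_of_mem _ hy0S)
      omega

/-- Every strongly admissible labelling has at most one min-max numbering:
two min-max numberings of the same admissible labelling agree on all in/out arguments. -/
theorem minMax_unique
    {Ar : Type*} [Fintype Ar] (att : Ar → Ar → Prop) (Lab : Ar → Label) (MM1 MM2 : Ar → ℕ)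
    (hadm : Admissible att Lab)
    (h1 : IsMinMax att Lab MM1) (h2 : IsMinMax att Lab MM2) :
    ∀ x, Lab x ≠ Label.und → MM1 x = MM2 x := by
  intro x hx
  exact le_antisymm
    (minMax_le_aux att Lab MM1 MM2 hadm h1 h2 (MM2 x) x hx le_rfl)
    (minMax_le_aux att Lab MM2 MM1 hadm h2 h1 (MM1 x) x hx le_rfl)
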